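/- Let ν be a (nonnegative) Borel measure on ℝ, and let κ ≥ 0, β′ > 0, C > 0 be constants such that ν({y : |y − z| ≤ r}) ≤ C r^κ |z|^{−β′−κ} for every z ≠ 0 and every r with 0 < r ≤ |z|/2. Then there exists a constant C′ > 0 such that ν({u : |u| ≥ ε}) ≤ C′ ε^{−β′} for every ε > 0. -/
import Mathlib


open MeasureTheory

/-- A measure satisfying the `κ`-measure condition `ν(B_r(z)) ≤ C r^κ |z|^{-β'-κ}` for
`0 < r ≤ |z|/2` has Blumenthal–Getoor-type tails: `ν({|u| ≥ ε}) ≤ C' ε^{-β'}` for all `ε > 0`. -/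
theorem kappa_measure_tail_bound (ν : Measure ℝ) (κ β' C : ℝ)
    (hκ : 0 ≤ κ) (hβ : 0 < β') (hC : 0 < C)
    (hball : ∀ z : ℝ, z ≠ 0 → ∀ r : ℝ, 0 < r → r ≤ |z| / 2 →
      ν {y | |y - z| ≤ r} ≤ ENNReal.ofReal (C * r ^ κ * |z| ^ (-β' - κ))) :
    ∃ C' > 0, ∀ ε : ℝ, 0 < ε →
      ν {u | ε ≤ |u|} ≤ ENNReal.ofReal (C' * ε ^ (-β')) := by
  classical
  set q : ℝ := (2:ℝ) ^ (-β') with hqdef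
  have hq0 : 0 < q := Real.rpow_pos_of_pos two_pos _
  have hq1 : q < 1 := Real.rpow_lt_one_of_one_lt_of_neg one_lt_two (neg_neg_iff_pos.mpr hβ)
  have h3pos : (0:ℝ) < (3:ℝ) ^ (-β' - κ) := Real.rpow_pos_of_pos (by norm_num) _
  have h2pos : (0:ℝ) < (2:ℝ) ^ β' := Real.rpow_pos_of_pos two_pos _
  have hsub : (0:ℝ) < 1 - q := sub_pos.mpr hq1
  refine ⟨2 * C * (3:ℝ) ^ (-β' - κ) * (2:ℝ) ^ β' * (1 - q)⁻¹, by positivity, ?_⟩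
  intro ε hε
  set a : ℕ → ℝ := fun k => ε * 2 ^ k / 2 with hadef
  have hapos : ∀ k, 0 < a k := fun k => by
    have : (0:ℝ) < 2 ^ k := by positivity
    simp only [hadef]; positivity
  -- covering
  have hcover : {u : ℝ | ε ≤ |u|} ⊆
      ⋃ k : ℕ, ({y : ℝ | |y - 3 * a k| ≤ a k} ∪ {y : ℝ | |y - (-(3 * a k))| ≤ a k}) := by
    intro u hu
    simp only [Set.mem_setOf_eq] at hu
    have hu0 : 0 < |u| := lt_of_lt_of_le hε hu
    have hex : ∃ N : ℕ, |u| < ε * 2 ^ N := by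
      obtain ⟨N, hN⟩ := pow_unbounded_of_one_lt (|u| / ε) one_lt_two
      exact ⟨N, by rwa [div_lt_iff₀ hε, mul_comm] at hN⟩
    set m := Nat.find hex with hm
    have hmspec : |u| < ε * 2 ^ m := Nat.find_spec hex
    have hm1 : 1 ≤ m := by
      by_contra h
      push_neg at h
      interval_cases m
      · simp only [pow_zero, mul_one] at hmspec
        exact absurd hu (not_le.mpr hmspec)
    set k := m - 1 with hk
    have hksucc : k + 1 = m := Nat.succ_pred_eq_of_pos hm1
    have hlow : ε * 2 ^ k ≤ |u| := by
      by_contra h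
      push_neg at h
      exact absurd (Nat.find_min' hex h) (by omega)
    have hhigh : |u| ≤ ε * 2 ^ (k + 1) := by
      rw [hksucc]; exact hmspec.le
    have hpow : (2:ℝ) ^ (k+1) = 2 * 2 ^ k := by ring
    have habs : |(|u|) - 3 * a k| ≤ a k := by
      rw [abs_le]
      constructor
      · simp only [hadef]; rw [hpow] at hhigh; nlinarith
      · simp only [hadef]; rw [hpow] at hhigh; nlinarith
    refine Set.mem_iUnion.mpr ⟨k, ?_⟩
    rcases le_or_gt 0 u with h | h
    · left
      simp only [Set.mem_setOf_eq]
      rwa [abs_of_nonneg h] at habs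
    · right
      simp only [Set.mem_setOf_eq, sub_neg_eq_add]
      have : u + 3 * a k = -((|u|) - 3 * a k) := by rw [abs_of_neg h]; ring
      rwa [this, abs_neg]
  -- per-ball bound
  set D : ℝ := 2 * C * (3:ℝ) ^ (-β' - κ) * (ε / 2) ^ (-β') with hDdef
  have hkey : ∀ k : ℕ, 2 * (C * (a k) ^ κ * (3 * a k) ^ (-β' - κ)) = D * q ^ k := by
    intro k
    have h1 : (3 * a k) ^ (-β' - κ) = (3:ℝ) ^ (-β' - κ) * (a k) ^ (-β' - κ) :=
      Real.mul_rpow (by norm_num) (hapos k).le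
    have h2 : (a k) ^ κ * (a k) ^ (-β' - κ) = (a k) ^ (-β') := by
      rw [← Real.rpow_add (hapos k)]; ring_nf
    have h3 : (a k) ^ (-β') = (ε / 2) ^ (-β') * ((2:ℝ) ^ k) ^ (-β') := by
      have : a k = (ε / 2) * 2 ^ k := by simp only [hadef]; ring
      rw [this, Real.mul_rpow (by positivity) (by positivity)]
    have h4 : ((2:ℝ) ^ k) ^ (-β') = q ^ k := by
      rw [← Real.rpow_natCast 2 k, ← Real.rpow_mul (by norm_num), mul_comm,
        Real.rpow_mul (by norm_num), Real.rpow_natCast]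
    calc 2 * (C * (a k) ^ κ * (3 * a k) ^ (-β' - κ))
        = 2 * C * (3:ℝ) ^ (-β' - κ) * ((a k) ^ κ * (a k) ^ (-β' - κ)) := by rw [h1]; ring
      _ = 2 * C * (3:ℝ) ^ (-β' - κ) * (a k) ^ (-β') := by rw [h2]
      _ = D * q ^ k := by rw [h3, h4, hDdef]; ring
  have hballk : ∀ k : ℕ,
      ν ({y : ℝ | |y - 3 * a k| ≤ a k} ∪ {y : ℝ | |y - (-(3 * a k))| ≤ a k})
        ≤ ENNReal.ofReal (D * q ^ k) := by
    intro k
    have hz : (0:ℝ) < 3 * a k := by have := hapos k; linarith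
    have h1 : ν {y : ℝ | |y - 3 * a k| ≤ a k}
        ≤ ENNReal.ofReal (C * (a k) ^ κ * (3 * a k) ^ (-β' - κ)) := by
      have := hball (3 * a k) (ne_of_gt hz) (a k) (hapos k)
        (by rw [abs_of_pos hz]; linarith [hapos k])
      rwa [abs_of_pos hz] at this
    have h2 : ν {y : ℝ | |y - (-(3 * a k))| ≤ a k}
        ≤ ENNReal.ofReal (C * (a k) ^ κ * (3 * a k) ^ (-β' - κ)) := by
      have := hball (-(3 * a k)) (by simp [ne_of_gt hz]) (a k) (hapos k)
        (by rw [abs_neg, abs_of_pos hz]; linarith [hapos k])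
      rwa [abs_neg, abs_of_pos hz] at this
    calc ν _ ≤ ν {y : ℝ | |y - 3 * a k| ≤ a k} + ν {y : ℝ | |y - (-(3 * a k))| ≤ a k} :=
          measure_union_le _ _
      _ ≤ ENNReal.ofReal (C * (a k) ^ κ * (3 * a k) ^ (-β' - κ))
          + ENNReal.ofReal (C * (a k) ^ κ * (3 * a k) ^ (-β' - κ)) := add_le_add h1 h2
      _ = ENNReal.ofReal (2 * (C * (a k) ^ κ * (3 * a k) ^ (-β' - κ))) := by
          rw [← ENNReal.ofReal_add (by positivity) (by positivity)]; ring_nf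
      _ = ENNReal.ofReal (D * q ^ k) := by rw [hkey k]
  have hDpos : 0 < D := by simp only [hDdef]; positivity
  have hsummable : Summable (fun k : ℕ => D * q ^ k) :=
    (summable_geometric_of_lt_one hq0.le hq1).mul_left D
  calc ν {u : ℝ | ε ≤ |u|}
      ≤ ν (⋃ k : ℕ, ({y : ℝ | |y - 3 * a k| ≤ a k} ∪ {y : ℝ | |y - (-(3 * a k))| ≤ a k})) :=
        measure_mono hcover
    _ ≤ ∑' k : ℕ, ν ({y : ℝ | |y - 3 * a k| ≤ a k} ∪ {y : ℝ | |y - (-(3 * a k))| ≤ a k}) :=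
        measure_iUnion_le _
    _ ≤ ∑' k : ℕ, ENNReal.ofReal (D * q ^ k) := ENNReal.tsum_le_tsum hballk
    _ = ENNReal.ofReal (∑' k : ℕ, D * q ^ k) :=
        (ENNReal.ofReal_tsum_of_nonneg (fun k => by positivity) hsummable).symm
    _ = ENNReal.ofReal (D * (1 - q)⁻¹) := by
        rw [tsum_mul_left, tsum_geometric_of_lt_one hq0.le hq1]
    _ ≤ ENNReal.ofReal (2 * C * (3:ℝ) ^ (-β' - κ) * (2:ℝ) ^ β' * (1 - q)⁻¹ * ε ^ (-β')) := by
        apply ENNReal.ofReal_le_ofReal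
        have hsplit : (ε / 2) ^ (-β') = ε ^ (-β') * (2:ℝ) ^ β' := by
          rw [Real.div_rpow hε.le (by norm_num : (0:ℝ) ≤ 2), Real.rpow_neg (by norm_num : (0:ℝ) ≤ 2)]
          field_simp
        rw [hDdef, hsplit]
        ring_nf
        exact le_rfl
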